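/- Assume lim_{j→∞} λ_j = 0 and lim_{j→∞} γ_j = 0. Then for every ε ∈ (0,1) and every d ∈ ℕ one has n(ε,d) ≤ j(ε)^{min(d,d(ε))}; if moreover γ_1 > ε² (so that d(ε) ≥ 1), then additionally j(ε)^{min(d,d(ε))} ≤ n(ε^{2d(ε)}, d(ε)). Furthermore, n(ε,d) = n(ε,d(ε)) for every d ≥ d(ε). -/
import Mathlib


open Filter Real Set Topology
open scoped ENNReal NNReal

noncomputable section

/-- The weighted eigenvalues `λ_{k,j}`: `1` if `j = 1`, and `γ_k · λ_j` if `j ≥ 2`. -/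
def lamKJ (γ lam : ℕ → ℝ) (k j : ℕ) : ℝ := if j = 1 then 1 else γ k * lam j

/-- The information complexity `n(ε,d)`: the extended-natural cardinality of the set of
`d`-tuples of positive integers `(n_1,…,n_d)` with `λ_{1,n_1} ⋯ λ_{d,n_d} > ε²`. -/
def infoN (γ lam : ℕ → ℝ) (ε : ℝ) (d : ℕ) : ℕ∞ :=
  {n : Fin d → ℕ | (∀ i, 1 ≤ n i) ∧ ε ^ 2 < ∏ i, lamKJ γ lam (i.1 + 1) (n i)}.encard

/-- EXP-SPT with a given exponent `p`: there is `C ≥ 0` with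
`n(ε,d) ≤ C (1 + log ε⁻¹)^p` for all `d ≥ 1` and `ε ∈ (0,1]`. -/
def ExpSPTwith (γ lam : ℕ → ℝ) (p : ℝ) : Prop :=
  ∃ C : ℝ, 0 ≤ C ∧ ∀ d : ℕ, 1 ≤ d → ∀ ε : ℝ, 0 < ε → ε ≤ 1 →
    (infoN γ lam ε d : ℝ≥0∞) ≤ ENNReal.ofReal (C * (1 + Real.log ε⁻¹) ^ p)

/-- Exponential strong polynomial tractability. -/
def ExpSPT (γ lam : ℕ → ℝ) : Prop := ∃ p : ℝ, 0 ≤ p ∧ ExpSPTwith γ lam p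

/-- Exponential polynomial tractability: there are `C, q, p ≥ 0` with
`n(ε,d) ≤ C d^q (1 + log ε⁻¹)^p` for all `d ≥ 1` and `ε ∈ (0,1]`. -/
def ExpPT (γ lam : ℕ → ℝ) : Prop :=
  ∃ C q p : ℝ, 0 ≤ C ∧ 0 ≤ q ∧ 0 ≤ p ∧ ∀ d : ℕ, 1 ≤ d → ∀ ε : ℝ, 0 < ε → ε ≤ 1 →
    (infoN γ lam ε d : ℝ≥0∞) ≤ ENNReal.ofReal (C * (d : ℝ) ^ q * (1 + Real.log ε⁻¹) ^ p)

/-- EXP-QPT with a given exponent `t`. -/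
def ExpQPTwith (γ lam : ℕ → ℝ) (t : ℝ) : Prop :=
  ∃ C : ℝ, 0 ≤ C ∧ ∀ d : ℕ, 1 ≤ d → ∀ ε : ℝ, 0 < ε → ε ≤ 1 →
    (infoN γ lam ε d : ℝ≥0∞) ≤
      ENNReal.ofReal (C * Real.exp (t * (1 + Real.log d) * (1 + Real.log (1 + Real.log ε⁻¹))))

/-- Exponential quasi-polynomial tractability. -/
def ExpQPT (γ lam : ℕ → ℝ) : Prop := ∃ t : ℝ, 0 ≤ t ∧ ExpQPTwith γ lam t

/-- Exponential `(s,t)`-weak tractability: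
`log max(1, n(ε,d)) / (d^t + (1 + log ε⁻¹)^s) → 0` as `d + ε⁻¹ → ∞`
(in particular `n(ε,d)` is finite for all such `d, ε`). -/
def ExpSTWT (γ lam : ℕ → ℝ) (s t : ℝ) : Prop :=
  ∀ δ : ℝ, 0 < δ → ∃ T : ℝ, ∀ d : ℕ, 1 ≤ d → ∀ ε : ℝ, 0 < ε → ε ≤ 1 →
    T ≤ (d : ℝ) + ε⁻¹ →
    ∃ N : ℕ, infoN γ lam ε d = (N : ℕ∞) ∧
      Real.log (max 1 (N : ℝ)) / ((d : ℝ) ^ t + (1 + Real.log ε⁻¹) ^ s) < δ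

/-- `j(ε) = max { j ≥ 1 : λ_j > ε² }` (a well-defined maximum when `λ_j → 0`). -/
def jEps (lam : ℕ → ℝ) (ε : ℝ) : ℕ := sSup {j : ℕ | 1 ≤ j ∧ ε ^ 2 < lam j}

/-- `d(ε) = max { d ≥ 1 : γ_d > ε² }`, with `d(ε) = 0` if `γ_1 ≤ ε²`
(a well-defined maximum when `γ_d → 0`). -/
def dEps (γ : ℕ → ℝ) (ε : ℝ) : ℕ := sSup {d : ℕ | 1 ≤ d ∧ ε ^ 2 < γ d}

lemma prod_lamKJ_restrict (γ lam : ℕ → ℝ) {d m : ℕ} (hmd : m ≤ d) (n : Fin d → ℕ)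
    (h1 : ∀ i : Fin d, m ≤ i.1 → n i = 1) :
    ∏ i : Fin d, lamKJ γ lam (i.1 + 1) (n i)
      = ∏ i : Fin m, lamKJ γ lam (i.1 + 1) (n (Fin.castLE hmd i)) := by
  classical
  set G : ℕ → ℝ := fun i => if h : i < d then lamKJ γ lam (i + 1) (n ⟨i, h⟩) else 1 with hG
  have hL : ∏ i : Fin d, lamKJ γ lam (i.1 + 1) (n i) = ∏ i ∈ Finset.range d, G i := by
    rw [← Fin.prod_univ_eq_prod_range]
    refine Finset.prod_congr rfl fun i _ => ?_
    simp [hG, i.isLt]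
  have hR : ∏ i : Fin m, lamKJ γ lam (i.1 + 1) (n (Fin.castLE hmd i))
      = ∏ i ∈ Finset.range m, G i := by
    rw [← Fin.prod_univ_eq_prod_range]
    refine Finset.prod_congr rfl fun i _ => ?_
    have hid : i.1 < d := lt_of_lt_of_le i.isLt hmd
    simp only [hG, dif_pos hid]
    rfl
  rw [hL, hR]
  refine (Finset.prod_subset (Finset.range_subset_range.mpr hmd) fun x hx hnx => ?_).symm
  have hxd : x < d := Finset.mem_range.mp hx
  have hmx : m ≤ x := le_of_not_gt fun h => hnx (Finset.mem_range.mpr h)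
  simp [hG, dif_pos hxd, h1 ⟨x, hxd⟩ hmx, lamKJ]


/-- Lemma 1: if λ_j → 0 and γ_j → 0 then for every ε ∈ (0,1) and d ≥ 1,
n(ε,d) ≤ j(ε)^min(d,d(ε)); if moreover γ_1 > ε², then additionally
j(ε)^min(d,d(ε)) ≤ n(ε^(2d(ε)), d(ε)); and n(ε,d) = n(ε,d(ε)) for every d ≥ d(ε). -/
theorem stmt11 (γ lam : ℕ → ℝ)
    (hlam_anti : AntitoneOn lam (Set.Ici 1)) (hlam1 : lam 1 = 1) (hlam2 : 0 < lam 2)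
    (hlam_nonneg : ∀ j, 1 ≤ j → 0 ≤ lam j)
    (hγ_anti : AntitoneOn γ (Set.Ici 1))
    (hγ_pos : ∀ j, 1 ≤ j → 0 < γ j) (hγ_le : ∀ j, 1 ≤ j → γ j ≤ 1)
    (hlam0 : Tendsto lam atTop (nhds 0)) (hγ0 : Tendsto γ atTop (nhds 0)) :
    ∀ ε : ℝ, 0 < ε → ε < 1 →
      (∀ d : ℕ, 1 ≤ d →
        infoN γ lam ε d ≤ ((jEps lam ε ^ min d (dEps γ ε) : ℕ) : ℕ∞)) ∧
      (ε ^ 2 < γ 1 → ∀ d : ℕ, 1 ≤ d →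
        ((jEps lam ε ^ min d (dEps γ ε) : ℕ) : ℕ∞) ≤
          infoN γ lam (ε ^ (2 * dEps γ ε)) (dEps γ ε)) ∧
      (∀ d : ℕ, dEps γ ε ≤ d → infoN γ lam ε d = infoN γ lam ε (dEps γ ε)) := by
  classical
  intro ε hε0 hε1
  have hε2pos : (0:ℝ) < ε ^ 2 := by positivity
  have hε2lt1 : ε ^ 2 < 1 := by nlinarith
  have hlam_le1 : ∀ j, 1 ≤ j → lam j ≤ 1 := fun j hj => by
    have := hlam_anti (Set.mem_Ici.mpr le_rfl) hj hj
    rwa [hlam1] at this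
  -- boundedness of the λ-set
  have hSlbdd : BddAbove {j : ℕ | 1 ≤ j ∧ ε ^ 2 < lam j} := by
    obtain ⟨N, hN⟩ := Filter.eventually_atTop.mp (hlam0.eventually_lt_const hε2pos)
    refine ⟨N, fun j hj => ?_⟩
    by_contra h
    push_neg at h
    exact absurd (hN j h.le) (not_lt.mpr hj.2.le)
  have hJmem : jEps lam ε ∈ {j : ℕ | 1 ≤ j ∧ ε ^ 2 < lam j} :=
    Nat.sSup_mem ⟨1, le_refl 1, by rw [hlam1]; exact hε2lt1⟩ hSlbdd
  set J := jEps lam ε with hJdef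
  have hJ1 : 1 ≤ J := hJmem.1
  have hle_J : ∀ j, 1 ≤ j → ε ^ 2 < lam j → j ≤ J := fun j h1 h2 => le_csSup hSlbdd ⟨h1, h2⟩
  have hlam_gt : ∀ j, 1 ≤ j → j ≤ J → ε ^ 2 < lam j := fun j h1 hjJ =>
    lt_of_lt_of_le hJmem.2 (hlam_anti h1 hJ1 hjJ)
  -- boundedness of the γ-set
  have hSgbdd : BddAbove {k : ℕ | 1 ≤ k ∧ ε ^ 2 < γ k} := by
    obtain ⟨N, hN⟩ := Filter.eventually_atTop.mp (hγ0.eventually_lt_const hε2pos)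
    refine ⟨N, fun j hj => ?_⟩
    by_contra h
    push_neg at h
    exact absurd (hN j h.le) (not_lt.mpr hj.2.le)
  set D := dEps γ ε with hDdef
  have hγ_le_eps : ∀ k, D < k → γ k ≤ ε ^ 2 := by
    intro k hk
    by_contra h
    push_neg at h
    have : k ≤ D := le_csSup hSgbdd ⟨by omega, h⟩
    omega
  -- lamKJ bounds
  have hKJ_nonneg : ∀ (k j : ℕ), 1 ≤ k → 1 ≤ j → 0 ≤ lamKJ γ lam k j := by
    intro k j hk hj
    unfold lamKJ
    split
    · norm_num
    · exact mul_nonneg (hγ_pos k hk).le (hlam_nonneg j hj)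
  have hKJ_le1 : ∀ (k j : ℕ), 1 ≤ k → 1 ≤ j → lamKJ γ lam k j ≤ 1 := by
    intro k j hk hj
    unfold lamKJ
    split
    · norm_num
    · exact mul_le_one₀ (hγ_le k hk) (hlam_nonneg j hj) (hlam_le1 j hj)
  -- each factor exceeds ε²
  have hfac : ∀ (d : ℕ) (n : Fin d → ℕ), (∀ i, 1 ≤ n i) →
      ε ^ 2 < ∏ i, lamKJ γ lam (i.1 + 1) (n i) →
      ∀ i : Fin d, ε ^ 2 < lamKJ γ lam (i.1 + 1) (n i) := by
    intro d n hn1 hnp i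
    have key : ∏ j : Fin d, lamKJ γ lam (j.1 + 1) (n j) ≤ lamKJ γ lam (i.1 + 1) (n i) := by
      rw [← Finset.mul_prod_erase _ _ (Finset.mem_univ i)]
      calc lamKJ γ lam (i.1 + 1) (n i) * ∏ j ∈ Finset.univ.erase i, lamKJ γ lam (j.1 + 1) (n j)
          ≤ lamKJ γ lam (i.1 + 1) (n i) * 1 := by
            refine mul_le_mul_of_nonneg_left ?_ (hKJ_nonneg _ _ (by omega) (hn1 i))
            exact Finset.prod_le_one (fun j _ => hKJ_nonneg _ _ (by omega) (hn1 j))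
              (fun j _ => hKJ_le1 _ _ (by omega) (hn1 j))
        _ = lamKJ γ lam (i.1 + 1) (n i) := mul_one _
    linarith
  -- coordinate structure of admissible tuples
  have hcoord : ∀ (d : ℕ) (n : Fin d → ℕ), (∀ i, 1 ≤ n i) →
      ε ^ 2 < ∏ i, lamKJ γ lam (i.1 + 1) (n i) →
      ∀ i : Fin d, n i ≤ J ∧ (D ≤ i.1 → n i = 1) := by
    intro d n hn1 hnp i
    have hf := hfac d n hn1 hnp i
    by_cases h2 : n i = 1
    · exact ⟨h2 ▸ hJ1, fun _ => h2⟩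
    · rw [lamKJ, if_neg h2] at hf
      have hni1 := hn1 i
      have hγi : ε ^ 2 < γ (i.1 + 1) := by
        have : γ (i.1 + 1) * lam (n i) ≤ γ (i.1 + 1) :=
          mul_le_of_le_one_right (hγ_pos _ (by omega)).le (hlam_le1 _ (by omega))
        linarith
      have hlami : ε ^ 2 < lam (n i) := by
        have : γ (i.1 + 1) * lam (n i) ≤ lam (n i) :=
          mul_le_of_le_one_left (hlam_nonneg _ (by omega)) (hγ_le _ (by omega))
        linarith
      refine ⟨hle_J _ (by omega) hlami, fun hD => ?_⟩
      exact absurd hγi (not_lt.mpr (hγ_le_eps _ (by omega)))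
  refine ⟨?_, ?_, ?_⟩
  -- Part (a)
  · intro d hd
    set m := min d D with hm
    have hmd : m ≤ d := min_le_left _ _
    set A := {n : Fin d → ℕ | (∀ i, 1 ≤ n i) ∧ ε ^ 2 < ∏ i, lamKJ γ lam (i.1 + 1) (n i)}
      with hA
    set g : (Fin d → ℕ) → (Fin m → Fin J) := fun n i =>
      ⟨min (n (Fin.castLE hmd i)) J - 1, by omega⟩ with hg
    have hinj : Set.InjOn g A := by
      intro n hn n' hn' hgeq
      funext i
      have hid : i.1 < d := i.isLt
      by_cases hi : i.1 < m
      · have hv := congrArg Fin.val (congrFun hgeq ⟨i.1, hi⟩)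
        simp only [hg] at hv
        have hc : Fin.castLE hmd ⟨i.1, hi⟩ = i := rfl
        rw [hc] at hv
        have hni := (hcoord d n hn.1 hn.2 i).1
        have hni' := (hcoord d n' hn'.1 hn'.2 i).1
        have h1 := hn.1 i
        have h1' := hn'.1 i
        omega
      · have hDi : D ≤ i.1 := by omega
        rw [(hcoord d n hn.1 hn.2 i).2 hDi, (hcoord d n' hn'.1 hn'.2 i).2 hDi]
    calc infoN γ lam ε d = A.encard := rfl
      _ = (g '' A).encard := hinj.encard_image.symm
      _ ≤ (Set.univ : Set (Fin m → Fin J)).encard := Set.encard_mono (Set.subset_univ _)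
      _ = ((J ^ m : ℕ) : ℕ∞) := by
          rw [Set.encard_univ]
          simp [ENat.card_eq_coe_fintype_card]
  -- Part (b)
  · intro hγ1 d hd
    have hDmem : D ∈ {k : ℕ | 1 ≤ k ∧ ε ^ 2 < γ k} :=
      Nat.sSup_mem ⟨1, le_refl 1, hγ1⟩ hSgbdd
    have hD1 : 1 ≤ D := hDmem.1
    have hγ_gt : ∀ k, 1 ≤ k → k ≤ D → ε ^ 2 < γ k := fun k h1 h2 =>
      lt_of_lt_of_le hDmem.2 (hγ_anti h1 hD1 h2)
    set B := {n : Fin D → ℕ | (∀ i, 1 ≤ n i) ∧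
      (ε ^ (2 * D)) ^ 2 < ∏ i, lamKJ γ lam (i.1 + 1) (n i)} with hB
    set h : (Fin D → Fin J) → (Fin D → ℕ) := fun x i => (x i).1 + 1 with hh
    have himg : ∀ x : Fin D → Fin J, h x ∈ B := by
      intro x
      refine ⟨fun i => by simp [hh], ?_⟩
      have hfac4 : ∀ i : Fin D, ε ^ 4 < lamKJ γ lam (i.1 + 1) (h x i) := by
        intro i
        by_cases hx : (x i).1 + 1 = 1
        · have : lamKJ γ lam (i.1 + 1) (h x i) = 1 := by rw [hh]; simp [lamKJ, hx]
          rw [this]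
          calc ε ^ 4 < 1 ^ 4 := by
                exact pow_lt_pow_left₀ hε1 hε0.le (by norm_num)
            _ = 1 := one_pow 4
        · have heq : lamKJ γ lam (i.1 + 1) (h x i) = γ (i.1 + 1) * lam ((x i).1 + 1) := by
            rw [hh]; simp only [lamKJ, if_neg hx]
          rw [heq]
          have hiD : i.1 < D := i.isLt
          have h1 : ε ^ 2 < γ (i.1 + 1) := hγ_gt _ (by omega) (by omega)
          have hxJ : (x i).1 < J := (x i).isLt
          have h2 : ε ^ 2 < lam ((x i).1 + 1) := hlam_gt _ (by omega) (by omega)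
          nlinarith
      have hlt : (ε ^ 4) ^ D < ∏ i : Fin D, lamKJ γ lam (i.1 + 1) (h x i) := by
        have := Finset.prod_lt_prod_of_nonempty (s := Finset.univ)
          (f := fun _ : Fin D => ε ^ 4) (g := fun i : Fin D => lamKJ γ lam (i.1 + 1) (h x i))
          (fun i _ => by positivity) (fun i _ => hfac4 i)
          ⟨⟨0, by omega⟩, Finset.mem_univ _⟩
        simpa using this
      have hexp : (ε ^ (2 * D)) ^ 2 = (ε ^ 4) ^ D := by
        rw [← pow_mul, ← pow_mul]
        ring_nf
      rw [hexp]
      exact hlt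
    have hinj : Function.Injective h := by
      intro x x' heq
      funext i
      have := congrFun heq i
      simp only [hh] at this
      exact Fin.ext (by omega)
    calc ((J ^ min d D : ℕ) : ℕ∞) ≤ ((J ^ D : ℕ) : ℕ∞) := by
          exact_mod_cast Nat.pow_le_pow_right hJ1 (min_le_right _ _)
      _ = (Set.univ : Set (Fin D → Fin J)).encard := by
          rw [Set.encard_univ]
          simp [ENat.card_eq_coe_fintype_card]
      _ = (h '' Set.univ).encard := (hinj.injOn.encard_image).symm
      _ ≤ B.encard := Set.encard_mono (by rintro _ ⟨x, -, rfl⟩; exact himg x)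
      _ = infoN γ lam (ε ^ (2 * D)) D := rfl
  -- Part (c)
  · intro d hDd
    set f : (Fin d → ℕ) → (Fin D → ℕ) := fun n i => n (Fin.castLE hDd i) with hf
    set A := {n : Fin d → ℕ | (∀ i, 1 ≤ n i) ∧ ε ^ 2 < ∏ i, lamKJ γ lam (i.1 + 1) (n i)}
      with hA
    set A' := {n : Fin D → ℕ | (∀ i, 1 ≤ n i) ∧ ε ^ 2 < ∏ i, lamKJ γ lam (i.1 + 1) (n i)}
      with hA'
    have hone : ∀ n ∈ A, ∀ i : Fin d, D ≤ i.1 → n i = 1 := fun n hn i hDi =>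
      (hcoord d n hn.1 hn.2 i).2 hDi
    have hprod : ∀ n ∈ A, ∏ i : Fin d, lamKJ γ lam (i.1 + 1) (n i)
        = ∏ i : Fin D, lamKJ γ lam (i.1 + 1) (f n i) :=
      fun n hn => prod_lamKJ_restrict γ lam hDd n (hone n hn)
    have hinj : Set.InjOn f A := by
      intro n hn n' hn' hfeq
      funext i
      by_cases hi : i.1 < D
      · exact congrFun hfeq ⟨i.1, hi⟩
      · rw [hone n hn i (by omega), hone n' hn' i (by omega)]
    have himg : f '' A = A' := by
      ext n'
      constructor
      · rintro ⟨n, hn, rfl⟩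
        exact ⟨fun i => hn.1 _, by rw [← hprod n hn]; exact hn.2⟩
      · intro hn'
        set n : Fin d → ℕ := fun i => if hi : i.1 < D then n' ⟨i.1, hi⟩ else 1 with hn
        have hnA : n ∈ A := by
          refine ⟨fun i => ?_, ?_⟩
          · simp only [hn]
            split
            · exact hn'.1 _
            · exact le_rfl
          · have h1 : ∀ i : Fin d, D ≤ i.1 → n i = 1 := by
              intro i hDi
              simp only [hn, dif_neg (by omega : ¬ i.1 < D)]
            rw [prod_lamKJ_restrict γ lam hDd n h1]
            have : ∀ i : Fin D, n (Fin.castLE hDd i) = n' i := by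
              intro i
              simp only [hn]
              rw [dif_pos (show (Fin.castLE hDd i).1 < D from i.isLt)]
              exact congrArg n' (Fin.ext rfl)
            rw [Finset.prod_congr rfl fun i _ => by rw [this i]]
            exact hn'.2
        refine ⟨n, hnA, ?_⟩
        funext i
        simp only [hf, hn]
        rw [dif_pos (show (Fin.castLE hDd i).1 < D from i.isLt)]
        exact congrArg n' (Fin.ext rfl)
    calc infoN γ lam ε d = A.encard := rfl
      _ = (f '' A).encard := hinj.encard_image.symm
      _ = A'.encard := by rw [himg]
      _ = infoN γ lam ε D := rfl
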